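/- Let N ≥ 2 and a, b be positive integers, and let φ(x) = N^{−a}(x + t), φ_*(x) = N^{−a}(x + t_*), f(x) = N^{−b}(x + w), f_*(x) = N^{−b}(x + w_*) be contracting maps on ℝ^d (with t, t_*, w, w_* ∈ ℝ^d) such that each of the four maps sends [0,1]^d into itself. Suppose P and Q are faces of [0,1]^d with dim P = dim Q, φ(P) = φ_*(Q), and φ ∘ f(P) = φ_* ∘ f_*(Q). Then φ ∘ f^m(P) = φ_* ∘ f_*^m(Q) for every m ≥ 1. -/

import Mathlib

open Set

/-- The closed unit cube `[0,1]^d` in `ℝ^d`. -/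
def unitCube (d : ℕ) : Set (Fin d → ℝ) := {x | ∀ m, x m ∈ Set.Icc (0 : ℝ) 1}

/-- The contracting similarity `x ↦ N⁻¹(x + t)` on `ℝ^d`. -/
noncomputable def cmap {d : ℕ} (N : ℕ) (t : Fin d → ℕ) (x : Fin d → ℝ) : Fin d → ℝ :=
  fun m => (x m + t m) / N

/-- The face of `[0,1]^d` determined by an index set `s` and prescribed values `a`
(`a m ∈ {0,1}` for `m ∈ s`); its dimension is `d - s.card`. -/
def face {d : ℕ} (s : Finset (Fin d)) (a : Fin d → ℝ) : Set (Fin d → ℝ) :=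
  {x | x ∈ unitCube d ∧ ∀ m ∈ s, x m = a m}

/-- The map `x ↦ N^{-a}(x + t)` on `ℝ^d`. -/
noncomputable def scaleMap {d : ℕ} (N a : ℕ) (t : Fin d → ℝ) (x : Fin d → ℝ) :
    Fin d → ℝ :=
  fun m => (x m + t m) / (N : ℝ) ^ a

/-- **Lemma.** Let `φ(x) = N^{-a}(x+t)`, `φ_*(x) = N^{-a}(x+t_*)`, `f(x) = N^{-b}(x+w)`,
`f_*(x) = N^{-b}(x+w_*)` be contracting maps sending `[0,1]^d` into itself. If `P, Q` are
faces of `[0,1]^d` with `dim P = dim Q`, `φ(P) = φ_*(Q)` and `φ∘f(P) = φ_*∘f_*(Q)`, then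
`φ∘f^m(P) = φ_*∘f_*^m(Q)` for every `m ≥ 1`. -/
theorem comp_iterate_face_eq
    {d N : ℕ} (hN : 2 ≤ N) (a b : ℕ) (ha : 1 ≤ a) (hb : 1 ≤ b)
    (t t₀ w w₀ : Fin d → ℝ)
    (hφ : Set.MapsTo (scaleMap N a t) (unitCube d) (unitCube d))
    (hφ₀ : Set.MapsTo (scaleMap N a t₀) (unitCube d) (unitCube d))
    (hf : Set.MapsTo (scaleMap N b w) (unitCube d) (unitCube d))
    (hf₀ : Set.MapsTo (scaleMap N b w₀) (unitCube d) (unitCube d))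
    (sP sQ : Finset (Fin d)) (aP aQ : Fin d → ℝ)
    (haP : ∀ m ∈ sP, aP m = 0 ∨ aP m = 1) (haQ : ∀ m ∈ sQ, aQ m = 0 ∨ aQ m = 1)
    (hdim : sP.card = sQ.card)
    (h1 : scaleMap N a t '' face sP aP = scaleMap N a t₀ '' face sQ aQ)
    (h2 : (scaleMap N a t ∘ scaleMap N b w) '' face sP aP =
          (scaleMap N a t₀ ∘ scaleMap N b w₀) '' face sQ aQ) :
    ∀ m : ℕ, 1 ≤ m →
      (scaleMap N a t ∘ (scaleMap N b w)^[m]) '' face sP aP =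
      (scaleMap N a t₀ ∘ (scaleMap N b w₀)^[m]) '' face sQ aQ := by
  have hNpos : (0:ℝ) < (N:ℝ) := by
    have : 0 < N := by omega
    exact_mod_cast this
  have hpow : ∀ A : ℕ, (0:ℝ) < (N:ℝ) ^ A := fun A => pow_pos hNpos A
  -- injectivity of scaleMap
  have hinj : ∀ (A : ℕ) (T : Fin d → ℝ), Function.Injective (scaleMap N A T) := by
    intro A T x y hxy
    funext m
    have h := congrFun hxy m
    have hA := (hpow A).ne'
    simp only [scaleMap] at h
    field_simp at h
    linarith
  set c : Fin d → ℝ := fun m => t m - t₀ m with hc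
  set P := face sP aP with hP
  set Q := face sQ aQ with hQdef
  -- Q = P + c
  have hQ1 : (fun x => x + c) '' P = Q := by
    apply Set.image_injective.mpr (hinj a t₀)
    rw [← h1, Set.image_image]
    apply Set.image_congr'
    intro x
    funext m
    simp only [scaleMap, Pi.add_apply, hc]
    ring_nf
  -- composed maps
  set u : Fin d → ℝ := fun m => w m + (N:ℝ) ^ b * t m with hu
  set u₀ : Fin d → ℝ := fun m => w₀ m + (N:ℝ) ^ b * t₀ m with hu₀
  have hcomp : ∀ (T W : Fin d → ℝ) x,
      scaleMap N a T (scaleMap N b W x) =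
        scaleMap N (a+b) (fun m => W m + (N:ℝ) ^ b * T m) x := by
    intro T W x
    funext m
    simp only [scaleMap]
    rw [pow_add]
    field_simp
    ring
  set c₂ : Fin d → ℝ := fun m => u m - u₀ m with hc₂
  have hQ2 : (fun x => x + c₂) '' P = Q := by
    apply Set.image_injective.mpr (hinj (a+b) u₀)
    rw [Set.image_image]
    have hl : scaleMap N (a+b) u '' P = (scaleMap N a t ∘ scaleMap N b w) '' P := by
      apply Set.image_congr'
      intro x
      exact (hcomp t w x).symm
    have hr : scaleMap N (a+b) u₀ '' Q = (scaleMap N a t₀ ∘ scaleMap N b w₀) '' Q := by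
      apply Set.image_congr'
      intro x
      exact (hcomp t₀ w₀ x).symm
    have h2' : scaleMap N (a+b) u '' P = scaleMap N (a+b) u₀ '' Q := by
      rw [hl, hr]; exact h2
    rw [← h2']
    apply Set.image_congr'
    intro x
    funext m
    simp only [scaleMap, Pi.add_apply, hc₂, hu, hu₀]
    ring_nf
  -- rigidity: c = c₂
  have heq : (fun x => x + c) '' P = (fun x => x + c₂) '' P := hQ1.trans hQ2.symm
  set δ : Fin d → ℝ := c - c₂ with hδ
  have hfwd : ∀ p ∈ P, p + δ ∈ P := by
    intro p hp
    have : p + c ∈ (fun x => x + c₂) '' P := heq ▸ Set.mem_image_of_mem _ hp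
    obtain ⟨q, hq, hqe⟩ := this
    have : q = p + δ := by
      funext m
      have := congrFun hqe m
      simp only [Pi.add_apply, Pi.sub_apply, hδ] at this ⊢
      linarith
    rwa [this] at hq
  have hbwd : ∀ p ∈ P, p - δ ∈ P := by
    intro p hp
    have : p + c₂ ∈ (fun x => x + c) '' P := heq ▸ Set.mem_image_of_mem _ hp
    obtain ⟨q, hq, hqe⟩ := this
    have : q = p - δ := by
      funext m
      have := congrFun hqe m
      simp only [Pi.add_apply, Pi.sub_apply, hδ] at this ⊢
      linarith
    rwa [this] at hq
  -- a point of P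
  set p₀ : Fin d → ℝ := fun m => if m ∈ sP then aP m else 0 with hp₀def
  have hp₀ : p₀ ∈ P := by
    constructor
    · intro m
      simp only [hp₀def]
      split
      · rcases haP m (by assumption) with h | h <;> rw [h] <;> norm_num
      · norm_num
    · intro m hm
      simp [hp₀def, hm]
  have hiter : ∀ n : ℕ, p₀ + n • δ ∈ P ∧ p₀ - n • δ ∈ P := by
    intro n
    induction n with
    | zero =>
      simp only [Nat.cast_zero, zero_smul, add_zero, sub_zero]
      exact ⟨hp₀, hp₀⟩
    | succ n ih =>
      constructor
      · have := hfwd _ ih.1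
        convert this using 1
        funext m
        simp [add_nsmul]
        ring
      · have := hbwd _ ih.2
        convert this using 1
        funext m
        simp [add_nsmul]
        ring
  have hδ0 : δ = 0 := by
    by_contra hne
    have : ∃ m, δ m ≠ 0 := by
      by_contra h
      push_neg at h
      exact hne (funext h)
    obtain ⟨m, hm⟩ := this
    obtain ⟨n, hn⟩ := exists_nat_gt (1 / |δ m|)
    have habs : (0:ℝ) < |δ m| := abs_pos.mpr hm
    have hn1 : 1 < (n:ℝ) * |δ m| := by
      rw [div_lt_iff₀ habs] at hn
      linarith
    obtain ⟨h₁, h₂⟩ := hiter n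
    have e₁ := (h₁.1 m)
    have e₂ := (h₂.1 m)
    have e₀ := (hp₀.1 m)
    simp only [Pi.add_apply, Pi.sub_apply, Pi.smul_apply, nsmul_eq_mul, Pi.mul_apply, Pi.natCast_apply, Set.mem_Icc] at e₁ e₂ e₀
    rcases abs_cases (δ m) with ⟨hh, _⟩ | ⟨hh, _⟩
    · rw [hh] at hn1
      linarith [e₁.1, e₁.2, e₀.1, e₀.2]
    · rw [hh] at hn1
      linarith [e₂.1, e₂.2, e₀.1, e₀.2]
  have hcc : c = c₂ := by
    have := sub_eq_zero.mp (by rw [← hδ] at *; exact hδ0)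
    exact this
  -- key relation : w₀ m = w m + (N^b - 1) * c m
  have hw : ∀ m, c m + w₀ m = w m + (N:ℝ) ^ b * c m := by
    intro m
    have := congrFun hcc m
    simp only [hc, hc₂, hu, hu₀] at this
    simp only [hc]
    linear_combination this
  -- conjugation facts
  have hfc : ∀ x, scaleMap N b w₀ (x + c) = scaleMap N b w x + c := by
    intro x
    funext m
    have hbne := (hpow b).ne'
    simp only [scaleMap, Pi.add_apply]
    have := hw m
    field_simp
    linarith [this, mul_comm ((N:ℝ)^b) (c m)]
  have hit : ∀ n x, (scaleMap N b w₀)^[n] (x + c) = (scaleMap N b w)^[n] x + c := by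
    intro n
    induction n with
    | zero => intro x; simp
    | succ n ih =>
      intro x
      rw [Function.iterate_succ_apply, Function.iterate_succ_apply, hfc, ih]
  have hφt : ∀ y, scaleMap N a t₀ (y + c) = scaleMap N a t y := by
    intro y
    funext m
    simp only [scaleMap, Pi.add_apply, hc]
    ring_nf
  intro m hm
  rw [← hQ1, Set.image_image]
  apply Set.image_congr'
  intro x
  simp only [Function.comp_apply]
  rw [hit, hφt]
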